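/- Suppose there is no bias and the latent-quality distribution is group-independent: β_A = β_B = 0, μ_A = μ_B, η_A = η_B = η > 0, and σ_A > σ_B > 0. Let γ ∈ [0,1) and assume x^fair(γ) ∈ D. If α ≠ 1/2, then Q(α) > Q(x^fair(γ)) ≥ Q(x^obl); if α = 1/2, then Q(α) = Q(x^fair(γ)) = Q(x^obl). In particular, in this setting imposing the γ-rule on the group-oblivious algorithm never decreases the selection utility, for every choice of the parameters. -/

import Mathlib

noncomputable def gpdf (t : ℝ) : ℝ := Real.exp (-t ^ 2 / 2) / Real.sqrt (2 * Real.pi)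

noncomputable def gcdf (x : ℝ) : ℝ := ∫ t in Set.Iic x, gpdf t

noncomputable def gquant : ℝ → ℝ := Function.invFun gcdf

noncomputable def sHat (η σ : ℝ) : ℝ := Real.sqrt (η ^ 2 + σ ^ 2)

noncomputable def sTil (η σ : ℝ) : ℝ := η ^ 2 / sHat η σ

def Dset (pA α : ℝ) : Set ℝ :=
  {x | x ∈ Set.Ioo (0:ℝ) 1 ∧ (α - pA * x) / (1 - pA) ∈ Set.Ioo (0:ℝ) 1}

noncomputable def Qfun (pA α μA μB sA sB x : ℝ) : ℝ :=
  (1 / α) * (pA * (μA * x + sA * gpdf (gquant (1 - x)))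
    + (1 - pA) * (μB * ((α - pA * x) / (1 - pA))
      + sB * gpdf (gquant (1 - (α - pA * x) / (1 - pA)))))

noncomputable def clampTo (lo hi x : ℝ) : ℝ := min hi (max lo x)

open MeasureTheory intervalIntegral Set Filter Real Topology

lemma gpdf_pos (t : ℝ) : 0 < gpdf t := by
  unfold gpdf
  positivity

lemma gpdf_eq (t : ℝ) : gpdf t = Real.exp (-(1/2) * t ^ 2) * (Real.sqrt (2 * Real.pi))⁻¹ := by
  unfold gpdf; rw [div_eq_mul_inv]; ring_nf

lemma gpdf_cont : Continuous gpdf := by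
  unfold gpdf
  fun_prop

lemma gpdf_integrable : Integrable gpdf := by
  have h := integrable_exp_neg_mul_sq (by norm_num : (0:ℝ) < 1/2)
  have h2 := h.mul_const (Real.sqrt (2 * Real.pi))⁻¹
  exact h2.congr (Filter.Eventually.of_forall fun t => (gpdf_eq t).symm)

lemma gpdf_integral : ∫ t, gpdf t = 1 := by
  simp_rw [gpdf_eq]
  rw [MeasureTheory.integral_mul_const, integral_gaussian]
  have h2 : π / (1/2) = 2 * π := by ring
  rw [h2, mul_inv_cancel₀ (by positivity : Real.sqrt (2*π) ≠ 0)]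

lemma gcdf_eq (x : ℝ) : gcdf x = gcdf 0 + ∫ t in (0:ℝ)..x, gpdf t := by
  have h := integral_Iic_sub_Iic (gpdf_integrable.integrableOn (s := Iic 0))
    (gpdf_integrable.integrableOn (s := Iic x))
  unfold gcdf
  linarith [h]

lemma gcdf_hasDerivAt (x : ℝ) : HasDerivAt gcdf (gpdf x) x := by
  have h : HasDerivAt (fun u => gcdf 0 + ∫ t in (0:ℝ)..u, gpdf t) (gpdf x) x := by
    refine HasDerivAt.const_add _ ?_
    exact intervalIntegral.integral_hasDerivAt_right
      (gpdf_integrable.intervalIntegrable)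
      (gpdf_cont.stronglyMeasurableAtFilter _ _)
      gpdf_cont.continuousAt
  exact h.congr_of_eventuallyEq (Filter.Eventually.of_forall fun u => gcdf_eq u)

lemma gcdf_strictMono : StrictMono gcdf := by
  intro a b hab
  rw [gcdf_eq a, gcdf_eq b]
  have : (∫ t in a..b, gpdf t) > 0 :=
    intervalIntegral_pos_of_pos (gpdf_integrable.intervalIntegrable) gpdf_pos hab
  have h2 : (∫ t in (0:ℝ)..b, gpdf t) - ∫ t in (0:ℝ)..a, gpdf t = ∫ t in a..b, gpdf t :=
    intervalIntegral.integral_interval_sub_left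
      (gpdf_integrable.intervalIntegrable) (gpdf_integrable.intervalIntegrable)
  linarith

lemma gcdf_pos (x : ℝ) : 0 < gcdf x := by
  have h0 : (0:ℝ) ≤ gcdf (x - 1) :=
    MeasureTheory.setIntegral_nonneg measurableSet_Iic (fun t _ => (gpdf_pos t).le)
  have := gcdf_strictMono (show x - 1 < x by linarith)
  linarith

lemma gcdf_lt_one (x : ℝ) : gcdf x < 1 := by
  have htot : gcdf x + (∫ t in Ioi x, gpdf t) = 1 := by
    unfold gcdf
    rw [integral_Iic_add_Ioi gpdf_integrable.integrableOn
      gpdf_integrable.integrableOn, gpdf_integral]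
  have hIoc : (0:ℝ) < ∫ t in Ioc x (x+1), gpdf t := by
    rw [← intervalIntegral.integral_of_le (by linarith : x ≤ x + 1)]
    exact intervalIntegral_pos_of_pos (gpdf_integrable.intervalIntegrable) gpdf_pos (by linarith)
  have hmono : (∫ t in Ioc x (x+1), gpdf t) ≤ ∫ t in Ioi x, gpdf t := by
    apply MeasureTheory.setIntegral_mono_set gpdf_integrable.integrableOn
      (Filter.Eventually.of_forall fun t => (gpdf_pos t).le)
    exact Filter.Eventually.of_forall (Ioc_subset_Ioi_self)
  linarith

lemma gcdf_tendsto_atTop : Tendsto gcdf atTop (𝓝 1) := by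
  have h : Tendsto (fun b => gcdf 0 + ∫ t in (0:ℝ)..b, gpdf t) atTop
      (𝓝 (gcdf 0 + ∫ t in Ioi (0:ℝ), gpdf t)) := by
    exact (MeasureTheory.intervalIntegral_tendsto_integral_Ioi 0
      gpdf_integrable.integrableOn tendsto_id).const_add _
  have he : gcdf 0 + ∫ t in Ioi (0:ℝ), gpdf t = 1 := by
    unfold gcdf
    rw [integral_Iic_add_Ioi gpdf_integrable.integrableOn
      gpdf_integrable.integrableOn, gpdf_integral]
  rw [← he]
  exact h.congr (fun b => (gcdf_eq b).symm)

lemma gcdf_tendsto_atBot : Tendsto gcdf atBot (𝓝 0) := by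
  have h : Tendsto (fun a => gcdf 0 - ∫ t in a..(0:ℝ), gpdf t) atBot
      (𝓝 (gcdf 0 - ∫ t in Iic (0:ℝ), gpdf t)) := by
    exact ((MeasureTheory.intervalIntegral_tendsto_integral_Iic 0
      gpdf_integrable.integrableOn tendsto_id).const_sub _)
  have he : gcdf 0 - ∫ t in Iic (0:ℝ), gpdf t = 0 := by
    unfold gcdf; ring
  rw [← he]
  refine h.congr (fun a => ?_)
  rw [gcdf_eq a, intervalIntegral.integral_symm]
  ring

lemma gcdf_surj {p : ℝ} (hp : p ∈ Ioo (0:ℝ) 1) : ∃ x, gcdf x = p := by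
  obtain ⟨a, ha⟩ := (gcdf_tendsto_atBot.eventually_lt_const hp.1).exists
  obtain ⟨b, hb⟩ := (gcdf_tendsto_atTop.eventually_const_lt hp.2).exists
  have hab : a ≤ b := by
    by_contra hc
    exact absurd (gcdf_strictMono (lt_of_not_ge hc)) (by nlinarith)
  have := intermediate_value_Icc hab (fun x _ =>
    (gcdf_hasDerivAt x).continuousAt.continuousWithinAt)
  obtain ⟨x, _, hx⟩ := this ⟨ha.le, hb.le⟩
  exact ⟨x, hx⟩

lemma gcdf_gquant {p : ℝ} (hp : p ∈ Ioo (0:ℝ) 1) : gcdf (gquant p) = p :=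
  Function.invFun_eq (gcdf_surj hp)

lemma gquant_gcdf (x : ℝ) : gquant (gcdf x) = x :=
  Function.leftInverse_invFun gcdf_strictMono.injective x

lemma gquant_lt {p q : ℝ} (hp : p ∈ Ioo (0:ℝ) 1) (hq : q ∈ Ioo (0:ℝ) 1) (h : p < q) :
    gquant p < gquant q := by
  have := gcdf_gquant hp
  have := gcdf_gquant hq
  exact gcdf_strictMono.lt_iff_lt.1 (by rw [gcdf_gquant hp, gcdf_gquant hq]; exact h)

lemma gcdf_zero : gcdf 0 = 1/2 := by
  have h1 : (∫ t in Iic (0:ℝ), gpdf (-t)) = ∫ t in Ioi (0:ℝ), gpdf t := by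
    simpa using integral_comp_neg_Iic 0 gpdf
  have h2 : (∫ t in Iic (0:ℝ), gpdf (-t)) = ∫ t in Iic (0:ℝ), gpdf t := by
    congr 1; funext t; unfold gpdf; rw [neg_sq]
  have h3 : gcdf 0 + (∫ t in Ioi (0:ℝ), gpdf t) = 1 := by
    unfold gcdf
    rw [integral_Iic_add_Ioi gpdf_integrable.integrableOn
      gpdf_integrable.integrableOn, gpdf_integral]
  unfold gcdf at *
  linarith

lemma gquant_half : gquant (1/2) = 0 := by
  rw [← gcdf_zero, gquant_gcdf]

lemma gquant_pos {p : ℝ} (hp : 1/2 < p) (hp1 : p < 1) : 0 < gquant p := by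
  rw [← gquant_half]
  exact gquant_lt ⟨by norm_num, by norm_num⟩ ⟨by linarith, hp1⟩ hp

lemma gquant_neg {p : ℝ} (hp0 : 0 < p) (hp : p < 1/2) : gquant p < 0 := by
  rw [← gquant_half]
  exact gquant_lt ⟨hp0, by linarith⟩ ⟨by norm_num, by norm_num⟩ hp

lemma gquant_continuousAt {p : ℝ} (hp : p ∈ Ioo (0:ℝ) 1) : ContinuousAt gquant p := by
  rw [ContinuousAt]
  refine tendsto_order.2 ⟨?_, ?_⟩
  · intro b hb
    have h1 : gcdf b < p := by
      have := gcdf_strictMono hb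
      rwa [gcdf_gquant hp] at this
    filter_upwards [Ioo_mem_nhds h1 hp.2] with y hy
    have hy01 : y ∈ Ioo (0:ℝ) 1 := ⟨lt_trans (gcdf_pos b) hy.1, hy.2⟩
    have : gcdf b < gcdf (gquant y) := by rw [gcdf_gquant hy01]; exact hy.1
    exact gcdf_strictMono.lt_iff_lt.1 this
  · intro b hb
    have h1 : p < gcdf b := by
      have := gcdf_strictMono hb
      rwa [gcdf_gquant hp] at this
    filter_upwards [Ioo_mem_nhds hp.1 h1] with y hy
    have hy01 : y ∈ Ioo (0:ℝ) 1 := ⟨hy.1, lt_trans hy.2 (gcdf_lt_one b)⟩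
    have : gcdf (gquant y) < gcdf b := by rw [gcdf_gquant hy01]; exact hy.2
    exact gcdf_strictMono.lt_iff_lt.1 this

lemma gquant_hasDerivAt {p : ℝ} (hp : p ∈ Ioo (0:ℝ) 1) :
    HasDerivAt gquant (gpdf (gquant p))⁻¹ p := by
  refine HasDerivAt.of_local_left_inverse (gquant_continuousAt hp)
    (gcdf_hasDerivAt (gquant p)) (gpdf_pos _).ne' ?_
  filter_upwards [isOpen_Ioo.mem_nhds hp] with y hy
  exact gcdf_gquant hy

lemma gpdf_hasDerivAt (t : ℝ) : HasDerivAt gpdf (-t * gpdf t) t := by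
  have h1 : HasDerivAt (fun t : ℝ => -t ^ 2 / 2) (-t) t := by
    have := ((hasDerivAt_pow 2 t).neg).div_const 2
    refine this.congr_deriv ?_
    simp; ring
  have h2 := (h1.exp).div_const (Real.sqrt (2 * Real.pi))
  refine h2.congr_deriv ?_
  unfold gpdf
  ring

noncomputable def gfn (x : ℝ) : ℝ := gpdf (gquant (1 - x))

lemma gfn_hasDerivAt {x : ℝ} (hx : x ∈ Ioo (0:ℝ) 1) :
    HasDerivAt gfn (gquant (1 - x)) x := by
  have hmem : (1 - x) ∈ Ioo (0:ℝ) 1 := ⟨by linarith [hx.2], by linarith [hx.1]⟩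
  have h1 : HasDerivAt (fun x : ℝ => 1 - x) (-1) x := by
    simpa using (hasDerivAt_id x).const_sub 1
  have h2 : HasDerivAt (fun x : ℝ => gquant (1 - x)) ((gpdf (gquant (1 - x)))⁻¹ * (-1)) x :=
    (gquant_hasDerivAt hmem).comp x h1
  have h3 := (gpdf_hasDerivAt (gquant (1 - x))).comp x h2
  refine h3.congr_deriv ?_
  field_simp [(gpdf_pos (gquant (1 - x))).ne']

noncomputable def yOf (pA α x : ℝ) : ℝ := (α - pA * x) / (1 - pA)

noncomputable def Hfn (pA α sA sB x : ℝ) : ℝ :=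
  pA * sA * gfn x + (1 - pA) * sB * gfn (yOf pA α x)

lemma yOf_self (pA α : ℝ) (hpA : pA ≠ 1) : yOf pA α α = α := by
  unfold yOf
  field_simp [sub_ne_zero.mpr (Ne.symm hpA)]

lemma yOf_anti {pA α a b : ℝ} (hpA : 0 < pA) (hpA1 : pA < 1) (hab : a ≤ b) :
    yOf pA α b ≤ yOf pA α a := by
  unfold yOf
  have h1 : α - pA * b ≤ α - pA * a := by nlinarith
  have h2 : (0:ℝ) < 1 - pA := by linarith
  exact (div_le_div_iff_of_pos_right h2).mpr h1

lemma Hfn_hasDerivAt {pA α sA sB x : ℝ} (hpA : 0 < pA) (hpA1 : pA < 1)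
    (hx : x ∈ Ioo (0:ℝ) 1) (hy : yOf pA α x ∈ Ioo (0:ℝ) 1) :
    HasDerivAt (Hfn pA α sA sB)
      (pA * (sA * gquant (1 - x) - sB * gquant (1 - yOf pA α x))) x := by
  have hyd : HasDerivAt (fun x => yOf pA α x) (-pA / (1 - pA)) x := by
    unfold yOf
    have := ((hasDerivAt_id x).const_mul pA).const_sub α |>.div_const (1 - pA)
    refine this.congr_deriv ?_
    ring
  have h1 := (gfn_hasDerivAt hx).const_mul (pA * sA)
  have h2 := ((gfn_hasDerivAt hy).comp x hyd).const_mul ((1 - pA) * sB)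
  have h := h1.add h2
  refine h.congr_deriv ?_
  field_simp [sub_ne_zero.mpr (Ne.symm hpA1.ne)]
  ring

lemma yOf_strict_anti {pA α a b : ℝ} (hpA : 0 < pA) (hpA1 : pA < 1) (hab : a < b) :
    yOf pA α b < yOf pA α a := by
  unfold yOf
  have h1 : α - pA * b < α - pA * a := by nlinarith
  have h2 : (0:ℝ) < 1 - pA := by linarith
  exact (div_lt_div_iff_of_pos_right h2).mpr h1

lemma Hfn_strictAntiOn {pA α sA sB u : ℝ} (hpA : 0 < pA) (hpA1 : pA < 1)
    (hα0 : 0 < α) (hα : α < 1/2) (hsA : 0 < sA) (hsAB : sA < sB)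
    (hu1 : u < 1) (hαu : α < u) (hyu : 0 < yOf pA α u) :
    StrictAntiOn (Hfn pA α sA sB) (Icc α u) := by
  have hmem : ∀ x ∈ Icc α u, x ∈ Ioo (0:ℝ) 1 ∧ yOf pA α x ∈ Ioo (0:ℝ) 1 := by
    intro x hx
    have hy1 : yOf pA α x ≤ α := by
      have := yOf_anti (α := α) hpA hpA1 hx.1
      rwa [yOf_self pA α hpA1.ne] at this
    have hy0 : yOf pA α u ≤ yOf pA α x := yOf_anti hpA hpA1 hx.2
    exact ⟨⟨lt_of_lt_of_le hα0 hx.1, lt_of_le_of_lt hx.2 hu1⟩,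
      ⟨lt_of_lt_of_le hyu hy0, by linarith⟩⟩
  apply strictAntiOn_of_deriv_neg (convex_Icc α u)
  · intro x hx
    obtain ⟨h1, h2⟩ := hmem x hx
    exact (Hfn_hasDerivAt hpA hpA1 h1 h2).continuousAt.continuousWithinAt
  · intro x hx
    rw [interior_Icc] at hx
    obtain ⟨h1, h2⟩ := hmem x ⟨hx.1.le, hx.2.le⟩
    rw [(Hfn_hasDerivAt hpA hpA1 h1 h2).deriv]
    set qx := gquant (1 - x) with hqx
    set qy := gquant (1 - yOf pA α x) with hqy
    have hyα : yOf pA α x < α := by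
      have := yOf_strict_anti (α := α) hpA hpA1 hx.1
      rwa [yOf_self pA α hpA1.ne] at this
    have hqypos : 0 < qy := gquant_pos (by linarith [h2.2]) (by linarith [h2.1])
    have hqlt : qx < qy := by
      apply gquant_lt ⟨by linarith [h1.2], by linarith [h1.1]⟩
        ⟨by linarith [h2.2], by linarith [h2.1]⟩
      have : yOf pA α x < x := lt_of_lt_of_le hyα hx.1.le
      linarith
    have hin : sA * qx - sB * qy < 0 := by
      rcases le_or_gt qx 0 with h | h
      · nlinarith
      · nlinarith
    exact mul_neg_of_pos_of_neg hpA hin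

lemma Hfn_strictMonoOn {pA α sA sB l : ℝ} (hpA : 0 < pA) (hpA1 : pA < 1)
    (hα1 : α < 1) (hα : 1/2 < α) (hsA : 0 < sA) (hsAB : sA < sB)
    (hl0 : 0 < l) (hlα : l < α) (hyl : yOf pA α l < 1) :
    StrictMonoOn (Hfn pA α sA sB) (Icc l α) := by
  have hmem : ∀ x ∈ Icc l α, x ∈ Ioo (0:ℝ) 1 ∧ yOf pA α x ∈ Ioo (0:ℝ) 1 := by
    intro x hx
    have hy1 : α ≤ yOf pA α x := by
      have := yOf_anti (α := α) hpA hpA1 hx.2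
      rwa [yOf_self pA α hpA1.ne] at this
    have hy0 : yOf pA α x ≤ yOf pA α l := yOf_anti hpA hpA1 hx.1
    exact ⟨⟨lt_of_lt_of_le hl0 hx.1, lt_of_le_of_lt hx.2 hα1⟩,
      ⟨by linarith, lt_of_le_of_lt hy0 hyl⟩⟩
  apply strictMonoOn_of_deriv_pos (convex_Icc l α)
  · intro x hx
    obtain ⟨h1, h2⟩ := hmem x hx
    exact (Hfn_hasDerivAt hpA hpA1 h1 h2).continuousAt.continuousWithinAt
  · intro x hx
    rw [interior_Icc] at hx
    obtain ⟨h1, h2⟩ := hmem x ⟨hx.1.le, hx.2.le⟩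
    rw [(Hfn_hasDerivAt hpA hpA1 h1 h2).deriv]
    set qx := gquant (1 - x) with hqx
    set qy := gquant (1 - yOf pA α x) with hqy
    have hyα : α < yOf pA α x := by
      have := yOf_strict_anti (α := α) hpA hpA1 hx.2
      rwa [yOf_self pA α hpA1.ne] at this
    have hqyneg : qy < 0 := gquant_neg (by linarith [h2.2]) (by linarith [hyα])
    have hqlt : qy < qx := by
      apply gquant_lt ⟨by linarith [h2.2], by linarith [h2.1]⟩
        ⟨by linarith [h1.2], by linarith [h1.1]⟩
      have : x < yOf pA α x := lt_of_le_of_lt hx.2.le hyα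
      linarith
    have hin : 0 < sA * qx - sB * qy := by
      rcases le_or_gt 0 qx with h | h
      · nlinarith
      · nlinarith
    exact mul_pos hpA hin











lemma Qfun_eq {pA α : ℝ} (μ sA sB x : ℝ) (hpA1 : pA ≠ 1) (hα0 : α ≠ 0) :
    Qfun pA α μ μ sA sB x = μ + Hfn pA α sA sB x / α := by
  unfold Qfun Hfn gfn yOf
  have h1 : (1:ℝ) - pA ≠ 0 := sub_ne_zero.mpr (Ne.symm hpA1)
  field_simp
  ring

/-- with no bias and a group-independent latent-quality
distribution, the `γ`-rule never decreases the utility of the group-oblivious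
selection: strict improvement of demographic parity for `α ≠ 1/2`, equality at
`α = 1/2`. -/
theorem stmt18 (pA α μ η σA σB γ θ xobl xfair : ℝ)
    (hpA : pA ∈ Set.Ioo (0:ℝ) 1) (hα : α ∈ Set.Ioo (0:ℝ) 1)
    (hη : 0 < η) (hσB : 0 < σB) (hσ : σB < σA)
    (hγ : γ ∈ Set.Ico (0:ℝ) 1)
    (hθ : pA * (1 - gcdf ((θ - μ) / sHat η σA))
        + (1 - pA) * (1 - gcdf ((θ - μ) / sHat η σB)) = α)
    (hxobl : xobl = 1 - gcdf ((θ - μ) / sHat η σA))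
    (hxfair : xfair = clampTo (γ * α / ((1 - pA) + γ * pA)) (α / (pA + γ * (1 - pA))) xobl)
    (hfD : xfair ∈ Dset pA α) :
    (α ≠ 1 / 2 →
      Qfun pA α μ μ (sTil η σA) (sTil η σB) xfair
          < Qfun pA α μ μ (sTil η σA) (sTil η σB) α
      ∧ Qfun pA α μ μ (sTil η σA) (sTil η σB) xobl
          ≤ Qfun pA α μ μ (sTil η σA) (sTil η σB) xfair)
    ∧ (α = 1 / 2 →
      Qfun pA α μ μ (sTil η σA) (sTil η σB) α
          = Qfun pA α μ μ (sTil η σA) (sTil η σB) xfair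
      ∧ Qfun pA α μ μ (sTil η σA) (sTil η σB) xfair
          = Qfun pA α μ μ (sTil η σA) (sTil η σB) xobl) := by
  obtain ⟨hpA0, hpA1⟩ := hpA
  obtain ⟨hα0, hα1⟩ := hα
  have hpB : (0:ℝ) < 1 - pA := by linarith
  have hσA : 0 < σA := hσB.trans hσ
  have hhatB : 0 < sHat η σB := Real.sqrt_pos.mpr (by positivity)
  have hhatA : 0 < sHat η σA := Real.sqrt_pos.mpr (by positivity)
  have hhatBA : sHat η σB < sHat η σA := by
    unfold sHat
    apply Real.sqrt_lt_sqrt (by positivity)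
    nlinarith
  have hsA0 : 0 < sTil η σA := div_pos (by positivity) hhatA
  have hsAB : sTil η σA < sTil η σB := by
    unfold sTil
    exact (div_lt_div_iff_of_pos_left (by positivity) hhatA hhatB).mpr hhatBA
  set tA := (θ - μ) / sHat η σA with htA
  set tB := (θ - μ) / sHat η σB with htB
  have hxobl0 : 0 < xobl := by rw [hxobl]; linarith [gcdf_lt_one tA]
  have hxobl1 : xobl < 1 := by rw [hxobl]; linarith [gcdf_pos tA]
  have hyobl : yOf pA α xobl = 1 - gcdf tB := by
    unfold yOf
    rw [hxobl]
    rw [div_eq_iff (by linarith : (1:ℝ) - pA ≠ 0)]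
    nlinarith [hθ]
  have hyobl0 : 0 < yOf pA α xobl := by rw [hyobl]; linarith [gcdf_lt_one tB]
  have hyobl1 : yOf pA α xobl < 1 := by rw [hyobl]; linarith [gcdf_pos tB]
  have hαcomb : α = pA * xobl + (1 - pA) * yOf pA α xobl := by
    unfold yOf
    field_simp
    ring
  have hd1 : 0 < (1 - pA) + γ * pA := by nlinarith [hγ.1]
  have hd2 : 0 < pA + γ * (1 - pA) := by nlinarith [hγ.1]
  have hlo : γ * α / ((1 - pA) + γ * pA) < α := by
    rw [div_lt_iff₀ hd1]; nlinarith [mul_pos (mul_pos hα0 hpB) (show (0:ℝ) < 1 - γ by linarith [hγ.2])]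
  have hhi : α < α / (pA + γ * (1 - pA)) := by
    rw [lt_div_iff₀ hd2]; nlinarith [mul_pos (mul_pos hα0 hpB) (show (0:ℝ) < 1 - γ by linarith [hγ.2])]
  have hQ : ∀ z, Qfun pA α μ μ (sTil η σA) (sTil η σB) z
      = μ + Hfn pA α (sTil η σA) (sTil η σB) z / α :=
    fun z => Qfun_eq μ _ _ z hpA1.ne hα0.ne'
  have key1 : ∀ a b y : ℝ, a = pA * b + (1 - pA) * y → b < y → b < a := by
    intro a b y h hby
    have h3 : a - b = (1 - pA) * (y - b) := by linear_combination h
    have h4 := mul_pos hpB (sub_pos.mpr hby)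
    linarith
  have key2 : ∀ a b y : ℝ, a = pA * b + (1 - pA) * y → y < b → a < b := by
    intro a b y h hby
    have h3 : b - a = (1 - pA) * (b - y) := by linear_combination -h
    have h4 := mul_pos hpB (sub_pos.mpr hby)
    linarith
  rcases lt_trichotomy θ μ with hc | hc | hc
  · -- θ < μ : α > 1/2, xobl < α
    have htA0 : tA < 0 := div_neg_of_neg_of_pos (by linarith) hhatA
    have htBA : tB < tA := by
      rw [htA, htB, div_lt_div_iff₀ hhatB hhatA]
      have := mul_lt_mul_of_neg_left hhatBA (show θ - μ < 0 by linarith)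
      linarith
    have h1 : gcdf tA < 1/2 := by rw [← gcdf_zero]; exact gcdf_strictMono htA0
    have h2 : gcdf tB < gcdf tA := gcdf_strictMono htBA
    have hxobl12 : 1/2 < xobl := by rw [hxobl]; linarith
    have hxy : xobl < yOf pA α xobl := by rw [hyobl, hxobl]; linarith
    have hxoblα : xobl < α := key1 α xobl _ hαcomb hxy
    have hα12 : 1/2 < α := hxobl12.trans hxoblα
    have hxfair' : xfair = max (γ * α / ((1 - pA) + γ * pA)) xobl := by
      rw [hxfair]; unfold clampTo
      exact min_eq_right (le_of_lt (max_lt (hlo.trans hhi) (hxoblα.trans hhi)))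
    have hxfairα : xfair < α := by rw [hxfair']; exact max_lt hlo hxoblα
    have hxfair_ge : xobl ≤ xfair := by rw [hxfair']; exact le_max_right _ _
    have mono := Hfn_strictMonoOn (sA := sTil η σA) (sB := sTil η σB)
      hpA0 hpA1 hα1 hα12 hsA0 hsAB hxobl0 hxoblα hyobl1
    have hH1 : Hfn pA α (sTil η σA) (sTil η σB) xfair
        < Hfn pA α (sTil η σA) (sTil η σB) α :=
      mono ⟨hxfair_ge, hxfairα.le⟩ ⟨hxoblα.le, le_refl α⟩ hxfairα
    have hH2 : Hfn pA α (sTil η σA) (sTil η σB) xobl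
        ≤ Hfn pA α (sTil η σA) (sTil η σB) xfair := by
      rcases eq_or_lt_of_le hxfair_ge with h | h
      · rw [h]
      · exact (mono ⟨le_refl _, hxoblα.le⟩ ⟨hxfair_ge, hxfairα.le⟩ h).le
    refine ⟨fun _ => ⟨?_, ?_⟩, fun h => absurd h (by intro h; rw [h] at hα12; linarith)⟩
    · rw [hQ, hQ]
      exact add_lt_add_right ((div_lt_div_iff_of_pos_right hα0).mpr hH1) μ
    · rw [hQ, hQ]
      exact add_le_add_right ((div_le_div_iff_of_pos_right hα0).mpr hH2) μ
  · -- θ = μ : everything equals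
    have htA0 : tA = 0 := by rw [htA, hc, sub_self, zero_div]
    have htB0 : tB = 0 := by rw [htB, hc, sub_self, zero_div]
    have hα2 : α = 1/2 := by rw [htA0, htB0, gcdf_zero] at hθ; linarith
    have hxα : xobl = α := by rw [hxobl, htA0, gcdf_zero, hα2]; norm_num
    have hxfairx : xfair = xobl := by
      rw [hxfair]; unfold clampTo
      rw [max_eq_right (by rw [hxα]; exact hlo.le),
        min_eq_right (by rw [hxα]; exact hhi.le)]
    refine ⟨fun h => absurd hα2 h, fun _ => ⟨?_, ?_⟩⟩
    · rw [hxfairx, hxα]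
    · rw [hxfairx, hxα]
  · -- θ > μ : α < 1/2, xobl > α
    have htA0 : 0 < tA := div_pos (by linarith) hhatA
    have htBA : tA < tB := by
      rw [htA, htB, div_lt_div_iff₀ hhatA hhatB]
      have := mul_lt_mul_of_pos_left hhatBA (show (0:ℝ) < θ - μ by linarith)
      linarith
    have h1 : 1/2 < gcdf tA := by rw [← gcdf_zero]; exact gcdf_strictMono htA0
    have h2 : gcdf tA < gcdf tB := gcdf_strictMono htBA
    have hxobl12 : xobl < 1/2 := by rw [hxobl]; linarith
    have hxy : yOf pA α xobl < xobl := by rw [hyobl, hxobl]; linarith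
    have hxoblα : α < xobl := key2 α xobl _ hαcomb hxy
    have hα12 : α < 1/2 := hxoblα.trans hxobl12
    have hxfair' : xfair = min (α / (pA + γ * (1 - pA))) xobl := by
      rw [hxfair]; unfold clampTo
      rw [max_eq_right (hlo.trans hxoblα).le]
    have hxfairα : α < xfair := by rw [hxfair']; exact lt_min hhi hxoblα
    have hxfair_le : xfair ≤ xobl := by rw [hxfair']; exact min_le_right _ _
    have anti := Hfn_strictAntiOn (sA := sTil η σA) (sB := sTil η σB)
      hpA0 hpA1 hα0 hα12 hsA0 hsAB hxobl1 hxoblα hyobl0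
    have hH1 : Hfn pA α (sTil η σA) (sTil η σB) xfair
        < Hfn pA α (sTil η σA) (sTil η σB) α :=
      anti ⟨le_refl α, hxoblα.le⟩ ⟨hxfairα.le, hxfair_le⟩ hxfairα
    have hH2 : Hfn pA α (sTil η σA) (sTil η σB) xobl
        ≤ Hfn pA α (sTil η σA) (sTil η σB) xfair := by
      rcases eq_or_lt_of_le hxfair_le with h | h
      · rw [h]
      · exact (anti ⟨hxfairα.le, hxfair_le⟩ ⟨hxoblα.le, le_refl _⟩ h).le
    refine ⟨fun _ => ⟨?_, ?_⟩, fun h => absurd h (by intro h; rw [h] at hα12; linarith)⟩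
    · rw [hQ, hQ]
      exact add_lt_add_right ((div_lt_div_iff_of_pos_right hα0).mpr hH1) μ
    · rw [hQ, hQ]
      exact add_le_add_right ((div_le_div_iff_of_pos_right hα0).mpr hH2) μ
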